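/- arXiv:math/0101150 — 6 statements merged into one kernel-verified Lean document; each statement's English description precedes it below -/
import Mathlib

section
/- Let U ⊆ ℝⁿ be an open set and let f, g : U → ℝ be smooth functions such that the gradient of f is nonzero at every point of U and, at every point p ∈ U, the gradients of f and g are linearly dependent (collinear). Then for each point p ∈ U there exist an open neighborhood O ⊆ U of p and a smooth function ρ : ℝ → ℝ of one variable such that g = ρ∘f on O. -/
open scoped RealInnerProductSpace
open Metric Set Filter

set_option maxHeartbeats 1000000

/-- Lemma 3.1: If `grad f ≠ 0` on an open set `U` and `grad g` is
everywhere collinear to `grad f`, then locally `g = ρ ∘ f` for some smooth `ρ`. -/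
theorem local_functional_dependence (n : ℕ) (U : Set (EuclideanSpace ℝ (Fin n)))
    (hU : IsOpen U) (f g : EuclideanSpace ℝ (Fin n) → ℝ)
    (hf : ContDiffOn ℝ (⊤ : ℕ∞) f U) (hg : ContDiffOn ℝ (⊤ : ℕ∞) g U)
    (hf0 : ∀ p ∈ U, gradient f p ≠ 0)
    (hdep : ∀ p ∈ U, ∃ c : ℝ, gradient g p = c • gradient f p)
    (p : EuclideanSpace ℝ (Fin n)) (hp : p ∈ U) :
    ∃ O ⊆ U, IsOpen O ∧ p ∈ O ∧
      ∃ ρ : ℝ → ℝ, ContDiff ℝ (⊤ : ℕ∞) ρ ∧ ∀ x ∈ O, g x = ρ (f x) := by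
  classical
  have hone : (1 : WithTop ℕ∞) ≤ ((⊤ : ℕ∞) : WithTop ℕ∞) := by exact_mod_cast le_top
  -- notation
  set u : EuclideanSpace ℝ (Fin n) := gradient f p with hu_def
  have hu : u ≠ 0 := hf0 p hp
  set c : ℝ := ‖u‖ with hc_def
  have hc : 0 < c := norm_pos_iff.mpr hu
  set e : EuclideanSpace ℝ (Fin n) := c⁻¹ • u with he_def
  have hee : ⟪e, e⟫ = 1 := by
    rw [he_def, real_inner_smul_left, real_inner_smul_right, real_inner_self_eq_norm_sq]
    rw [sq]
    field_simp
    rw [hc_def]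
  -- fderiv vs gradient
  have hgrad : ∀ (h : EuclideanSpace ℝ (Fin n) → ℝ) x v,
      fderiv ℝ h x v = ⟪gradient h x, v⟫ := by
    intro h x v
    have hh : (InnerProductSpace.toDual ℝ (EuclideanSpace ℝ (Fin n))) (gradient h x)
        = fderiv ℝ h x := (InnerProductSpace.toDual ℝ _).apply_symm_apply _
    rw [← hh, InnerProductSpace.toDual_apply_apply]
  -- collinearity at the level of fderiv
  have hdep' : ∀ x ∈ U, ∃ κ : ℝ, fderiv ℝ g x = κ • fderiv ℝ f x := by
    intro x hx
    obtain ⟨κ, hκ⟩ := hdep x hx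
    refine ⟨κ, ?_⟩
    ext v
    simp only [ContinuousLinearMap.smul_apply]
    rw [hgrad g x v, hκ, real_inner_smul_left, hgrad f x v]
    simp [smul_eq_mul]
  -- the straightening map F
  set F : EuclideanSpace ℝ (Fin n) → EuclideanSpace ℝ (Fin n) :=
    fun y => y + (c⁻¹ * f y - ⟪e, y⟫) • e with hF_def
  have hFinner : ∀ x, ⟪e, F x⟫ = c⁻¹ * f x := by
    intro x
    simp only [hF_def, inner_add_right, real_inner_smul_right, hee]
    ring
  -- derivative of F
  set B : EuclideanSpace ℝ (Fin n) → (EuclideanSpace ℝ (Fin n) →L[ℝ] EuclideanSpace ℝ (Fin n)) :=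
    fun x => ContinuousLinearMap.id ℝ _ + (c⁻¹ • fderiv ℝ f x - innerSL ℝ e).smulRight e
    with hB_def
  have hFderiv : ∀ x ∈ U, HasFDerivAt F (B x) x := by
    intro x hx
    have hfd : HasFDerivAt f (fderiv ℝ f x) x :=
      ((hf.contDiffAt (hU.mem_nhds hx)).differentiableAt (by simp)).hasFDerivAt
    have h1 : HasFDerivAt (fun y => c⁻¹ * f y) (c⁻¹ • fderiv ℝ f x) x := hfd.const_mul c⁻¹
    have h2 : HasFDerivAt (fun y : EuclideanSpace ℝ (Fin n) => ⟪e, y⟫) (innerSL ℝ e) x :=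
      (innerSL ℝ e).hasFDerivAt
    exact (hasFDerivAt_id x).add ((h1.sub h2).smul_const e)
  -- F is smooth on U
  have hFsmooth : ContDiffOn ℝ (⊤ : ℕ∞) F U := by
    apply contDiffOn_id.add
    exact ((contDiffOn_const.mul hf).sub (innerSL ℝ e).contDiff.contDiffOn).smul contDiffOn_const
  have hFC : ∀ x ∈ U, ContDiffAt ℝ (⊤ : ℕ∞) F x := fun x hx =>
    hFsmooth.contDiffAt (hU.mem_nhds hx)
  -- derivative at p is the identity
  have hBp : B p = ContinuousLinearMap.id ℝ _ := by
    rw [hB_def]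
    ext v
    have h1 : fderiv ℝ f p v = ⟪u, v⟫ := by rw [hgrad f p v, ← hu_def]
    simp only [ContinuousLinearMap.add_apply, ContinuousLinearMap.id_apply,
      ContinuousLinearMap.smulRight_apply, ContinuousLinearMap.sub_apply,
      ContinuousLinearMap.smul_apply, innerSL_apply_apply, h1, he_def, real_inner_smul_left]
    simp [smul_smul]
  have hFp' : HasFDerivAt F
      ((ContinuousLinearEquiv.refl ℝ (EuclideanSpace ℝ (Fin n)) :
        EuclideanSpace ℝ (Fin n) ≃L[ℝ] EuclideanSpace ℝ (Fin n)) :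
        EuclideanSpace ℝ (Fin n) →L[ℝ] EuclideanSpace ℝ (Fin n)) p := by
    have := hFderiv p hp
    rwa [hBp] at this
  -- the partial homeomorphism
  set Φ := (hFC p hp).toOpenPartialHomeomorph F hFp' (by simp) with hΦ_def
  have hΦcoe : (Φ : EuclideanSpace ℝ (Fin n) → EuclideanSpace ℝ (Fin n)) = F := rfl
  have hpsource : p ∈ Φ.source := (hFC p hp).mem_toOpenPartialHomeomorph_source hFp' (by simp)
  set q₀ := F p with hq0_def
  have hq0target : q₀ ∈ Φ.target := by
    have := Φ.map_source hpsource
    rwa [hΦcoe] at this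
  -- the good open set W of points with invertible derivative
  set W : Set (EuclideanSpace ℝ (Fin n)) := {x ∈ U | fderiv ℝ f x e ≠ 0} with hW_def
  have hWopen : IsOpen W := by
    have hcont : ContinuousOn (fun x => fderiv ℝ f x e) U :=
      (hf.continuousOn_fderiv_of_isOpen hU (by exact_mod_cast le_top)).clm_apply
        continuousOn_const
    have h2 := hcont.isOpen_inter_preimage hU (isOpen_compl_singleton : IsOpen ({(0:ℝ)}ᶜ))
    have heq : W = U ∩ (fun x => fderiv ℝ f x e) ⁻¹' {(0:ℝ)}ᶜ := by
      ext x; simp [hW_def]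
    rw [heq]
    exact h2
  have hpW : p ∈ W := by
    refine ⟨hp, ?_⟩
    have h2 : c⁻¹ * c ^ 2 = c := by rw [sq]; field_simp
    rw [hgrad f p e, ← hu_def, he_def, real_inner_smul_right, real_inner_self_eq_norm_sq,
      ← hc_def, h2]
    exact ne_of_gt hc
  -- the derivative equiv at points of W
  have hBequiv : ∀ x ∈ W, ∃ A : EuclideanSpace ℝ (Fin n) ≃L[ℝ] EuclideanSpace ℝ (Fin n),
      (A : EuclideanSpace ℝ (Fin n) →L[ℝ] EuclideanSpace ℝ (Fin n)) = B x := by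
    intro x hx
    set a : EuclideanSpace ℝ (Fin n) →L[ℝ] ℝ := c⁻¹ • fderiv ℝ f x - innerSL ℝ e with ha_def
    have ht : (fderiv ℝ f x) e ≠ 0 := hx.2
    have hae : a e = c⁻¹ * (fderiv ℝ f x) e - 1 := by
      simp only [ha_def, ContinuousLinearMap.sub_apply, ContinuousLinearMap.smul_apply,
        innerSL_apply_apply, smul_eq_mul]
      rw [hee]
    have hct : c⁻¹ * (fderiv ℝ f x) e ≠ 0 :=
      mul_ne_zero (inv_ne_zero (ne_of_gt hc)) ht
    set s : ℝ := (c⁻¹ * (fderiv ℝ f x) e)⁻¹ with hs_def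
    have hs : s * (c⁻¹ * (fderiv ℝ f x) e) = 1 := inv_mul_cancel₀ hct
    set C : EuclideanSpace ℝ (Fin n) →L[ℝ] EuclideanSpace ℝ (Fin n) :=
      ContinuousLinearMap.id ℝ _ - s • a.smulRight e with hC_def
    have hBapp : ∀ v : EuclideanSpace ℝ (Fin n), (B x) v = v + a v • e := by
      intro v
      simp only [hB_def, ContinuousLinearMap.add_apply, ContinuousLinearMap.id_apply,
        ContinuousLinearMap.smulRight_apply, ha_def]
    have hCapp : ∀ w : EuclideanSpace ℝ (Fin n), C w = w - (s * a w) • e := by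
      intro w
      simp only [hC_def, ContinuousLinearMap.sub_apply, ContinuousLinearMap.id_apply,
        ContinuousLinearMap.smul_apply, ContinuousLinearMap.smulRight_apply, smul_smul]
    refine ⟨ContinuousLinearEquiv.equivOfInverse (B x) C ?_ ?_, rfl⟩
    · intro v
      rw [hBapp, hCapp]
      have h2 : a (v + a v • e) = a v * (c⁻¹ * (fderiv ℝ f x) e) := by
        rw [map_add, map_smul, hae, smul_eq_mul]; ring
      rw [h2]
      have h3 : s * (a v * (c⁻¹ * (fderiv ℝ f x) e)) = a v := by
        linear_combination (a v) * hs
      rw [h3]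
      abel
    · intro w
      rw [hCapp, hBapp]
      have h2 : a (w - (s * a w) • e) = s * a w := by
        rw [map_sub, map_smul, hae, smul_eq_mul]
        linear_combination (-(a w)) * hs
      rw [h2]
      abel
  -- the neighborhood V of q₀
  set V : Set (EuclideanSpace ℝ (Fin n)) := Φ.target ∩ Φ.symm ⁻¹' W with hV_def
  have hVopen : IsOpen V := Φ.continuousOn_symm.isOpen_inter_preimage Φ.open_target hWopen
  have hq0V : q₀ ∈ V := by
    refine ⟨hq0target, ?_⟩
    have : Φ.symm q₀ = p := by
      have := Φ.left_inv hpsource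
      rwa [hΦcoe] at this
    simpa [this] using hpW
  obtain ⟨r, hr, hball⟩ := Metric.isOpen_iff.mp hVopen q₀ hq0V
  -- facts for points in the ball
  have hyfacts : ∀ y ∈ ball q₀ r, y ∈ Φ.target ∧ Φ.symm y ∈ W ∧ F (Φ.symm y) = y := by
    intro y hy
    obtain ⟨h1, h2⟩ := hball hy
    refine ⟨h1, h2, ?_⟩
    have := Φ.right_inv h1
    rwa [hΦcoe] at this
  -- smoothness of Φ.symm on the ball
  have hGsmooth : ∀ y ∈ ball q₀ r, ContDiffAt ℝ (⊤ : ℕ∞) Φ.symm y := by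
    intro y hy
    obtain ⟨h1, h2, h3⟩ := hyfacts y hy
    obtain ⟨A, hA⟩ := hBequiv _ h2
    refine Φ.contDiffAt_symm (f₀' := A) h1 ?_ ?_
    · show HasFDerivAt F _ _
      rw [hA]
      exact hFderiv _ h2.1
    · show ContDiffAt ℝ _ F _
      exact hFC _ h2.1
  -- f ∘ Φ.symm is c * ⟪e, ·⟫ on the ball
  have hfG : ∀ y ∈ ball q₀ r, f (Φ.symm y) = c * ⟪e, y⟫ := by
    intro y hy
    obtain ⟨h1, h2, h3⟩ := hyfacts y hy
    have := hFinner (Φ.symm y)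
    rw [h3] at this
    rw [this]
    field_simp
  -- key: g ∘ Φ.symm is constant on slices of the ball
  have hkey : ∀ y₁ ∈ ball q₀ r, ∀ y₂ ∈ ball q₀ r, ⟪e, y₁⟫ = ⟪e, y₂⟫ →
      g (Φ.symm y₁) = g (Φ.symm y₂) := by
    intro y₁ hy₁ y₂ hy₂ hinner12
    set γ : ℝ → EuclideanSpace ℝ (Fin n) := fun t => y₁ + t • (y₂ - y₁) with hγ_def
    have hγmem : ∀ t ∈ Icc (0:ℝ) 1, γ t ∈ ball q₀ r := fun t ht =>
      (convex_ball q₀ r).add_smul_sub_mem hy₁ hy₂ ht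
    set k : ℝ → ℝ := fun t => g (Φ.symm (γ t)) with hk_def
    have hderiv : ∀ t ∈ Icc (0:ℝ) 1, HasDerivAt k 0 t := by
      intro t ht
      have hyt := hγmem t ht
      obtain ⟨h1, h2, h3⟩ := hyfacts _ hyt
      have hGd : DifferentiableAt ℝ Φ.symm (γ t) :=
        (hGsmooth _ hyt).differentiableAt (by simp)
      have hgd : DifferentiableAt ℝ g (Φ.symm (γ t)) :=
        (hg.contDiffAt (hU.mem_nhds h2.1)).differentiableAt (by simp)
      have hfd : DifferentiableAt ℝ f (Φ.symm (γ t)) :=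
        (hf.contDiffAt (hU.mem_nhds h2.1)).differentiableAt (by simp)
      have hγd : HasDerivAt γ (y₂ - y₁) t := by
        simpa [hγ_def] using ((hasDerivAt_id t).smul_const (y₂ - y₁)).const_add y₁
      have hcomp : HasDerivAt k
          ((fderiv ℝ g (Φ.symm (γ t))).comp (fderiv ℝ Φ.symm (γ t)) (y₂ - y₁)) t := by
        have h5 : HasFDerivAt (fun y => g (Φ.symm y))
            ((fderiv ℝ g (Φ.symm (γ t))).comp (fderiv ℝ Φ.symm (γ t))) (γ t) :=
          (hgd.hasFDerivAt).comp (γ t) (hGd.hasFDerivAt)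
        exact h5.comp_hasDerivAt t hγd
      have hval : (fderiv ℝ g (Φ.symm (γ t))).comp (fderiv ℝ Φ.symm (γ t)) (y₂ - y₁) = 0 := by
        obtain ⟨κ, hκ⟩ := hdep' _ h2.1
        have hEq : (fun y => f (Φ.symm y)) =ᶠ[nhds (γ t)] fun y => c * ⟪e, y⟫ := by
          filter_upwards [isOpen_ball.mem_nhds hyt] with y hy using hfG y hy
        have h6 : fderiv ℝ (fun y => f (Φ.symm y)) (γ t) = c • innerSL ℝ e := by
          rw [hEq.fderiv_eq]
          exact (((innerSL ℝ e).hasFDerivAt (x := γ t)).const_mul c).fderiv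
        have h7 : fderiv ℝ (fun y => f (Φ.symm y)) (γ t)
            = (fderiv ℝ f (Φ.symm (γ t))).comp (fderiv ℝ Φ.symm (γ t)) :=
          fderiv_comp (γ t) hfd hGd
        have h8 : ⟪e, y₂ - y₁⟫ = 0 := by
          rw [inner_sub_right]
          rw [hinner12]
          ring
        simp only [ContinuousLinearMap.comp_apply, hκ, ContinuousLinearMap.smul_apply]
        have h9 : (fderiv ℝ f (Φ.symm (γ t))) ((fderiv ℝ Φ.symm (γ t)) (y₂ - y₁)) = 0 := by
          have := congrArg (fun (L : EuclideanSpace ℝ (Fin n) →L[ℝ] ℝ) => L (y₂ - y₁)) (h7.symm.trans h6)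
          simp only [ContinuousLinearMap.comp_apply, ContinuousLinearMap.smul_apply,
            innerSL_apply_apply] at this
          rw [this, h8, smul_eq_mul, mul_zero]
        rw [h9, smul_eq_mul, mul_zero]
      rw [← hval]
      exact hcomp
    have hcont : ContinuousOn k (Icc 0 1) := fun t ht =>
      ((hderiv t ht).continuousAt.continuousWithinAt)
    have h10 := constant_of_has_deriv_right_zero hcont
      (fun t ht => (hderiv t (Ico_subset_Icc_self ht)).hasDerivWithinAt) 1
      (right_mem_Icc.2 zero_le_one)
    have hγ1 : γ 1 = y₂ := by simp [hγ_def]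
    have hγ0 : γ 0 = y₁ := by simp [hγ_def]
    have : k 1 = k 0 := h10
    rw [hk_def] at this
    simp only [hγ1, hγ0] at this
    exact this.symm
  -- the bump function
  obtain ⟨ρ, hρsmooth, hρid, hρrange⟩ :
      ∃ ρ : ℝ → ℝ, ContDiff ℝ (⊤ : ℕ∞) ρ ∧ (∀ s, |s| ≤ c * r / 4 → ρ s = s) ∧
        (∀ s, |ρ s| < c * r / 2) := by
    have hrad : (0:ℝ) < c * r / 4 := by positivity
    have hrad2 : c * r / 4 < c * r / 2 := by nlinarith
    set ι : ContDiffBump (0:ℝ) := ⟨c*r/4, c*r/2, hrad, hrad2⟩ with hι_def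
    refine ⟨fun s => s * ι s, contDiff_id.mul ι.contDiff, ?_, ?_⟩
    · intro s hs
      show s * ι s = s
      rw [ι.one_of_mem_closedBall, mul_one]
      simpa [Real.dist_eq] using hs
    · intro s
      show |s * ι s| < c * r / 2
      by_cases h : |s| < c * r / 2
      · have h1 : |s * ι s| ≤ |s| := by
          rw [abs_mul]
          calc |s| * |ι s| ≤ |s| * 1 := by
                apply mul_le_mul_of_nonneg_left _ (abs_nonneg s)
                rw [abs_of_nonneg ι.nonneg]
                exact ι.le_one
            _ = |s| := mul_one _
        linarith
      · have hs0 : ι s = 0 := by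
          have : s ∉ Function.support ι := by
            rw [ι.support_eq]
            simp only [mem_ball, Real.dist_eq, sub_zero]
            simpa [hι_def] using h
          simpa [Function.mem_support, not_not] using this
        rw [hs0, mul_zero, abs_zero]
        positivity
  -- the map m : ℝ → ball
  set m : ℝ → EuclideanSpace ℝ (Fin n) := fun s => q₀ + ((ρ (s - f p)) / c) • e with hm_def
  have hm_mem : ∀ s, m s ∈ ball q₀ r := by
    intro s
    have h1 : |ρ (s - f p)| < c * r / 2 := hρrange _
    have : ‖m s - q₀‖ < r := by
      rw [hm_def]
      simp only [add_sub_cancel_left, norm_smul]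
      have he1 : ‖e‖ = 1 := by
        have := hee
        rw [real_inner_self_eq_norm_sq] at this
        nlinarith [norm_nonneg e]
      rw [he1, mul_one, Real.norm_eq_abs, abs_div, abs_of_pos hc, div_lt_iff₀ hc]
      calc |ρ (s - f p)| < c * r / 2 := h1
        _ < r * c := by nlinarith
    simpa [mem_ball, dist_eq_norm] using this
  have hmsmooth : ContDiff ℝ (⊤ : ℕ∞) m := by
    apply contDiff_const.add
    refine ContDiff.smul (f := fun s => ρ (s - f p) / c) ?_ contDiff_const
    exact ((hρsmooth.comp (contDiff_id.sub contDiff_const)).div_const c)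
  -- the function ρ' = g ∘ Φ.symm ∘ m
  set ρ' : ℝ → ℝ := fun s => g (Φ.symm (m s)) with hρ'_def
  have hρ'smooth : ContDiff ℝ (⊤ : ℕ∞) ρ' := by
    rw [contDiff_iff_contDiffAt]
    intro s
    have h1 : ContDiffAt ℝ (⊤ : ℕ∞) Φ.symm (m s) := hGsmooth _ (hm_mem s)
    have h2 : Φ.symm (m s) ∈ U := ((hyfacts _ (hm_mem s)).2.1).1
    have h3 : ContDiffAt ℝ (⊤ : ℕ∞) g (Φ.symm (m s)) := hg.contDiffAt (hU.mem_nhds h2)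
    exact (h3.comp _ h1).comp s (hmsmooth.contDiffAt)
  -- the open set O
  set O : Set (EuclideanSpace ℝ (Fin n)) :=
    (Φ.source ∩ U) ∩ F ⁻¹' (ball q₀ r) ∩ f ⁻¹' (ball (f p) (c * r / 4)) with hO_def
  have hOopen : IsOpen O := by
    have hO1 : IsOpen (Φ.source ∩ U) := Φ.open_source.inter hU
    have hO2 : IsOpen ((Φ.source ∩ U) ∩ F ⁻¹' (ball q₀ r)) := by
      apply ContinuousOn.isOpen_inter_preimage _ hO1 isOpen_ball
      exact (hFsmooth.continuousOn).mono (by intro x hx; exact hx.2)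
    have hfc : ContinuousOn f ((Φ.source ∩ U) ∩ F ⁻¹' (ball q₀ r)) :=
      hf.continuousOn.mono (by intro x hx; exact hx.1.2)
    exact hfc.isOpen_inter_preimage hO2 isOpen_ball
  have hpO : p ∈ O := by
    refine ⟨⟨⟨hpsource, hp⟩, ?_⟩, ?_⟩
    · show F p ∈ ball q₀ r
      rw [← hq0_def]
      exact mem_ball_self hr
    · show f p ∈ ball (f p) (c * r / 4)
      exact mem_ball_self (by positivity)
  refine ⟨O, ?_, hOopen, hpO, ρ', hρ'smooth, ?_⟩
  · intro x hx; exact hx.1.1.2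
  · -- the main identity
    intro x hx
    obtain ⟨⟨⟨hxsource, hxU⟩, hxball⟩, hxf⟩ := hx
    have hGF : Φ.symm (F x) = x := by
      have := Φ.left_inv hxsource
      rwa [hΦcoe] at this
    have hfx : |f x - f p| < c * r / 4 := by
      simpa [mem_ball, Real.dist_eq] using hxf
    have hρfx : ρ (f x - f p) = f x - f p := hρid _ hfx.le
    have hm_eq : m (f x) = q₀ + ((f x - f p) / c) • e := by
      simp only [hm_def]
      rw [hρfx]
    -- m (f x) and F x are both in the ball with the same ⟪e, ·⟫
    have hinner : ⟪e, m (f x)⟫ = ⟪e, F x⟫ := by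
      rw [hm_eq, hFinner x]
      simp only [inner_add_right, real_inner_smul_right, hee]
      have h2 : ⟪e, q₀⟫ = c⁻¹ * f p := hFinner p
      rw [h2]
      field_simp
      ring
    have hfin := hkey _ hxball _ (hm_mem (f x)) hinner.symm
    rw [hGF] at hfin
    exact hfin
end

section
/- Let Ω be an open subset of ℝⁿ × ℝ⁺ (ℝ⁺ the positive reals; coordinates x¹,…,xⁿ and v), let h, h̃ : ℝ → ℝ be smooth, and let W, W̃ : Ω → ℝ be smooth with ∂W/∂v ≠ 0 and ∂W̃/∂v ≠ 0 at every point of Ω. Suppose that at every point of Ω: h(W)/(∂W/∂v) = h̃(W̃)/(∂W̃/∂v) and, for each i ∈ {1,…,n}, (∂W/∂xⁱ)/(∂W/∂v) = (∂W̃/∂xⁱ)/(∂W̃/∂v). Then for each point q ∈ Ω there exist an open neighborhood O ⊆ Ω of q and a smooth function ρ : ℝ → ℝ with nowhere-vanishing derivative such that W̃ = ρ∘W on O and h̃(ρ(w)) = h(w)·ρ'(w) for all w in the image W(O). -/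
lemma sum_single_eq (n : ℕ) (x : Fin n → ℝ) :
    ∑ i, x i • (Pi.single i (1:ℝ) : Fin n → ℝ) = x := by
  funext j
  simp [Finset.sum_apply, Pi.single_apply]

lemma decomp_apply (n : ℕ) (A : ((Fin n → ℝ) × ℝ) →L[ℝ] ℝ) (x : Fin n → ℝ) (v : ℝ) :
    A (x, v) = (∑ i, x i * A ((Pi.single i (1:ℝ) : Fin n → ℝ), 0)) + v * A (0, 1) := by
  have h1 : ((x, v) : (Fin n → ℝ) × ℝ) = (x, 0) + v • ((0 : Fin n → ℝ), (1:ℝ)) := by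
    simp [Prod.ext_iff]
  have h2 : ((x, (0:ℝ)) : (Fin n → ℝ) × ℝ)
      = ∑ i, x i • (((Pi.single i (1:ℝ) : Fin n → ℝ), (0:ℝ)) : (Fin n → ℝ) × ℝ) := by
    rw [Prod.ext_iff]
    refine ⟨?_, ?_⟩
    · rw [Prod.fst_sum]
      exact (sum_single_eq n x).symm
    · rw [Prod.snd_sum]
      simp
  rw [h1, map_add, map_smul, h2, map_sum]
  simp only [map_smul, smul_eq_mul]

lemma prop_lin (n : ℕ) (A B : ((Fin n → ℝ) × ℝ) →L[ℝ] ℝ)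
    (hA : A (0,1) ≠ 0) (hB : B (0,1) ≠ 0)
    (hr : ∀ i : Fin n, A ((Pi.single i (1:ℝ) : Fin n → ℝ), 0) / A (0,1)
        = B ((Pi.single i (1:ℝ) : Fin n → ℝ), 0) / B (0,1)) :
    B = (B (0,1) / A (0,1)) • A := by
  have key : ∀ i, B ((Pi.single i (1:ℝ) : Fin n → ℝ), 0)
      = (B (0,1) / A (0,1)) * A ((Pi.single i (1:ℝ) : Fin n → ℝ), 0) := by
    intro i
    have h := hr i
    field_simp at h ⊢
    linarith [h]
  refine ContinuousLinearMap.ext fun p => ?_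
  obtain ⟨x, v⟩ := p
  have dA := decomp_apply n A x v
  have dB := decomp_apply n B x v
  rw [ContinuousLinearMap.smul_apply, smul_eq_mul, dB, dA]
  rw [mul_add, Finset.mul_sum]
  congr 1
  · exact Finset.sum_congr rfl fun i _ => by rw [key i]; ring
  · field_simp

noncomputable def derivEquiv (n : ℕ) (A : ((Fin n → ℝ) × ℝ) →L[ℝ] ℝ) (hA : A (0,1) ≠ 0) :
    ((Fin n → ℝ) × ℝ) ≃L[ℝ] ((Fin n → ℝ) × ℝ) :=
  ContinuousLinearEquiv.equivOfInverse
    ((ContinuousLinearMap.fst ℝ (Fin n → ℝ) ℝ).prod A)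
    ((ContinuousLinearMap.fst ℝ (Fin n → ℝ) ℝ).prod
      ((A (0,1))⁻¹ • (ContinuousLinearMap.snd ℝ (Fin n → ℝ) ℝ -
        A.comp ((ContinuousLinearMap.fst ℝ (Fin n → ℝ) ℝ).prod 0))))
    (by
      rintro ⟨x, v⟩
      have h : A (x, v) - A (x, 0) = v * A (0, 1) := by
        rw [← map_sub]
        have : ((x,v) : (Fin n → ℝ) × ℝ) - (x, 0) = v • ((0:Fin n → ℝ), (1:ℝ)) := by
          simp [Prod.ext_iff]
        rw [this, map_smul, smul_eq_mul]
      simp only [ContinuousLinearMap.prod_apply, ContinuousLinearMap.coe_fst',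
        ContinuousLinearMap.smul_apply, ContinuousLinearMap.sub_apply,
        ContinuousLinearMap.coe_snd', ContinuousLinearMap.comp_apply,
        ContinuousLinearMap.zero_apply, Prod.mk.injEq, smul_eq_mul]
      exact ⟨trivial, by rw [h]; field_simp⟩)
    (by
      rintro ⟨x, w⟩
      have h : A (x, (A (0,1))⁻¹ * (w - A (x, 0))) - A (x, 0)
          = ((A (0,1))⁻¹ * (w - A (x, 0))) * A (0, 1) := by
        rw [← map_sub]
        have : ((x, (A (0,1))⁻¹ * (w - A (x, 0))) : (Fin n → ℝ) × ℝ) - (x, 0)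
            = ((A (0,1))⁻¹ * (w - A (x, 0))) • ((0:Fin n → ℝ), (1:ℝ)) := by
          simp [Prod.ext_iff]
        rw [this, map_smul, smul_eq_mul]
      simp only [ContinuousLinearMap.prod_apply, ContinuousLinearMap.coe_fst',
        ContinuousLinearMap.smul_apply, ContinuousLinearMap.sub_apply,
        ContinuousLinearMap.coe_snd', ContinuousLinearMap.comp_apply,
        ContinuousLinearMap.zero_apply, Prod.mk.injEq, smul_eq_mul]
      refine ⟨trivial, ?_⟩
      have := h
      field_simp at this ⊢
      linarith [this])

@[simp] lemma derivEquiv_coe (n : ℕ) (A : ((Fin n → ℝ) × ℝ) →L[ℝ] ℝ) (hA : A (0,1) ≠ 0) :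
    (derivEquiv n A hA : ((Fin n → ℝ) × ℝ) →L[ℝ] ((Fin n → ℝ) × ℝ))
      = (ContinuousLinearMap.fst ℝ (Fin n → ℝ) ℝ).prod A := rfl

open Metric Set

lemma exists_local_inverse (n : ℕ) (Ω : Set ((Fin n → ℝ) × ℝ)) (hΩ : IsOpen Ω)
    (W : (Fin n → ℝ) × ℝ → ℝ) (hW : ContDiffOn ℝ (⊤ : ℕ∞) W Ω)
    (hWv : ∀ p ∈ Ω, fderiv ℝ W p (0, 1) ≠ 0)
    (q : (Fin n → ℝ) × ℝ) (hq : q ∈ Ω) :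
    ∃ (U V : Set ((Fin n → ℝ) × ℝ)) (Ψ : (Fin n → ℝ) × ℝ → (Fin n → ℝ) × ℝ),
      IsOpen U ∧ IsOpen V ∧ q ∈ U ∧ U ⊆ Ω ∧
      (∀ p ∈ U, (p.1, W p) ∈ V ∧ Ψ (p.1, W p) = p) ∧
      (∀ y ∈ V, Ψ y ∈ Ω ∧ ((Ψ y).1, W (Ψ y)) = y ∧ ContDiffAt ℝ (⊤ : ℕ∞) Ψ y) := by
  set Φ : (Fin n → ℝ) × ℝ → (Fin n → ℝ) × ℝ := fun p => (p.1, W p) with hΦdef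
  have hn : ((⊤ : ℕ∞) : WithTop ℕ∞) ≠ 0 := by simp
  have hΦat : ∀ p ∈ Ω, ContDiffAt ℝ (⊤ : ℕ∞) Φ p := fun p hp =>
    contDiffAt_fst.prodMk (hW.contDiffAt (hΩ.mem_nhds hp))
  have hΦ' : ∀ p, ∀ hp : p ∈ Ω, HasFDerivAt Φ
      ((derivEquiv n (fderiv ℝ W p) (hWv p hp)) :
        ((Fin n → ℝ) × ℝ) →L[ℝ] ((Fin n → ℝ) × ℝ)) p := by
    intro p hp
    rw [derivEquiv_coe]
    exact (hasFDerivAt_fst).prodMk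
      (((hW.contDiffAt (hΩ.mem_nhds hp)).differentiableAt hn).hasFDerivAt)
  set P := (hΦat q hq).toOpenPartialHomeomorph Φ (hΦ' q hq) hn with hPdef
  have hPcoe : ⇑P = Φ := rfl
  have hqsrc : q ∈ P.source := (hΦat q hq).mem_toOpenPartialHomeomorph_source (hΦ' q hq) hn
  -- smoothness of P.symm at points of the good set
  have hsymm_smooth : ∀ y ∈ P.target ∩ P.symm ⁻¹' Ω, ContDiffAt ℝ (⊤ : ℕ∞) P.symm y := by
    intro y hy
    obtain ⟨hyt, hyΩ⟩ := hy
    set p' := P.symm y with hp'def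
    have hp'Ω : p' ∈ Ω := hyΩ
    set P' := (hΦat p' hp'Ω).toOpenPartialHomeomorph Φ (hΦ' p' hp'Ω) hn with hP'def
    have hP'coe : ⇑P' = Φ := rfl
    have hp'src : p' ∈ P'.source := (hΦat p' hp'Ω).mem_toOpenPartialHomeomorph_source _ hn
    have hΦp' : Φ p' = y := P.right_inv hyt
    have hsm : ContDiffAt ℝ (⊤ : ℕ∞) P'.symm y := by
      have := (hΦat p' hp'Ω).to_localInverse (hΦ' p' hp'Ω) hn
      rw [hΦp'] at this
      exact this
    have hev : ∀ᶠ z in nhds y, P.symm z = P'.symm z := by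
      have hopen : IsOpen (P.target ∩ P.symm ⁻¹' P'.source) :=
        P.symm.continuousOn.isOpen_inter_preimage P.open_target P'.open_source
      have hymem : y ∈ P.target ∩ P.symm ⁻¹' P'.source := ⟨hyt, hp'src⟩
      filter_upwards [hopen.mem_nhds hymem] with z hz
      obtain ⟨hzt, hzs⟩ := hz
      have h1 : Φ (P.symm z) = z := P.right_inv hzt
      have h2 : P'.symm (P' (P.symm z)) = P.symm z := P'.left_inv hzs
      rw [hP'coe, h1] at h2
      exact h2.symm
    exact hsm.congr_of_eventuallyEq hev
  refine ⟨P.source ∩ Ω, P.target ∩ P.symm ⁻¹' Ω, P.symm,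
    P.open_source.inter hΩ,
    P.symm.continuousOn.isOpen_inter_preimage P.open_target hΩ,
    ⟨hqsrc, hq⟩, inter_subset_right, ?_, ?_⟩
  · rintro p ⟨hps, hpΩ⟩
    have h1 : Φ p ∈ P.target := P.map_source hps
    have h2 : P.symm (Φ p) = p := P.left_inv hps
    exact ⟨⟨h1, by rw [mem_preimage, h2]; exact hpΩ⟩, h2⟩
  · intro y hy
    refine ⟨hy.2, ?_, hsymm_smooth y hy⟩
    exact P.right_inv hy.1

/-- Theorem 3.1: If two pairs `(h, W)` and `(h̃, W̃)` on an open
`Ω ⊆ ℝⁿ × ℝ⁺` give the same quantities `h(W)/W_v` and `∇ᵢW/W_v`, then locally they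
are bound by a gauge transformation `W̃ = ρ∘W`, `h̃(ρ(w)) = h(w)·ρ'(w)`. -/
theorem local_gauge_equivalence (n : ℕ) (Ω : Set ((Fin n → ℝ) × ℝ)) (hΩ : IsOpen Ω)
    (hΩpos : ∀ p ∈ Ω, 0 < p.2)
    (h htil : ℝ → ℝ) (hh : ContDiff ℝ (⊤ : ℕ∞) h) (hhtil : ContDiff ℝ (⊤ : ℕ∞) htil)
    (W Wtil : (Fin n → ℝ) × ℝ → ℝ)
    (hW : ContDiffOn ℝ (⊤ : ℕ∞) W Ω) (hWtil : ContDiffOn ℝ (⊤ : ℕ∞) Wtil Ω)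
    (hWv : ∀ p ∈ Ω, fderiv ℝ W p (0, 1) ≠ 0)
    (hWtv : ∀ p ∈ Ω, fderiv ℝ Wtil p (0, 1) ≠ 0)
    (heq1 : ∀ p ∈ Ω, h (W p) / fderiv ℝ W p (0, 1)
        = htil (Wtil p) / fderiv ℝ Wtil p (0, 1))
    (heq2 : ∀ p ∈ Ω, ∀ i : Fin n,
        fderiv ℝ W p (Pi.single i 1, 0) / fderiv ℝ W p (0, 1)
          = fderiv ℝ Wtil p (Pi.single i 1, 0) / fderiv ℝ Wtil p (0, 1))
    (q : (Fin n → ℝ) × ℝ) (hq : q ∈ Ω) :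
    ∃ O ⊆ Ω, IsOpen O ∧ q ∈ O ∧
      ∃ ρ : ℝ → ℝ, ContDiff ℝ (⊤ : ℕ∞) ρ ∧ (∀ w, deriv ρ w ≠ 0) ∧
        (∀ p ∈ O, Wtil p = ρ (W p)) ∧
        ∀ w ∈ W '' O, htil (ρ w) = h w * deriv ρ w := by
  have hn : ((⊤ : ℕ∞) : WithTop ℕ∞) ≠ 0 := by simp
  set lam : (Fin n → ℝ) × ℝ → ℝ :=
    fun p => fderiv ℝ Wtil p (0, 1) / fderiv ℝ W p (0, 1) with hlamdef
  -- proportionality of differentials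
  have hBA : ∀ p ∈ Ω, fderiv ℝ Wtil p = lam p • fderiv ℝ W p := fun p hp =>
    prop_lin n (fderiv ℝ W p) (fderiv ℝ Wtil p) (hWv p hp) (hWtv p hp) (heq2 p hp)
  have hlamne : ∀ p ∈ Ω, lam p ≠ 0 := fun p hp =>
    div_ne_zero (hWtv p hp) (hWv p hp)
  -- local inverse
  obtain ⟨U, V, Ψ, hUopen, hVopen, hqU, hUΩ, hU, hV⟩ :=
    exists_local_inverse n Ω hΩ W hW hWv q hq
  set Φ : (Fin n → ℝ) × ℝ → (Fin n → ℝ) × ℝ := fun p => (p.1, W p) with hΦdef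
  set g : (Fin n → ℝ) × ℝ → ℝ := fun y => Wtil (Ψ y) with hgdef
  have hgsmooth : ∀ y ∈ V, ContDiffAt ℝ (⊤ : ℕ∞) g y := fun y hy =>
    (hWtil.contDiffAt (hΩ.mem_nhds (hV y hy).1)).comp y (hV y hy).2.2
  -- derivative of g
  have hgderiv : ∀ y ∈ V, HasFDerivAt g
      (lam (Ψ y) • ContinuousLinearMap.snd ℝ (Fin n → ℝ) ℝ) y := by
    intro y hy
    obtain ⟨hΨΩ, hΦΨy, hΨsm⟩ := hV y hy
    have hΨd : HasFDerivAt Ψ (fderiv ℝ Ψ y) y :=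
      (hΨsm.differentiableAt hn).hasFDerivAt
    have hWtd : HasFDerivAt Wtil (fderiv ℝ Wtil (Ψ y)) (Ψ y) :=
      ((hWtil.contDiffAt (hΩ.mem_nhds hΨΩ)).differentiableAt hn).hasFDerivAt
    have hgd : HasFDerivAt g ((fderiv ℝ Wtil (Ψ y)).comp (fderiv ℝ Ψ y)) y :=
      hWtd.comp y hΨd
    have hWd : HasFDerivAt W (fderiv ℝ W (Ψ y)) (Ψ y) :=
      ((hW.contDiffAt (hΩ.mem_nhds hΨΩ)).differentiableAt hn).hasFDerivAt
    have hΦd : HasFDerivAt Φ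
        ((ContinuousLinearMap.fst ℝ (Fin n → ℝ) ℝ).prod (fderiv ℝ W (Ψ y))) (Ψ y) :=
      (hasFDerivAt_fst).prodMk hWd
    have hcomp : HasFDerivAt (fun z => Φ (Ψ z))
        (((ContinuousLinearMap.fst ℝ (Fin n → ℝ) ℝ).prod
          (fderiv ℝ W (Ψ y))).comp (fderiv ℝ Ψ y)) y := hΦd.comp y hΨd
    have hev : (fun z => Φ (Ψ z)) =ᶠ[nhds y] id := by
      filter_upwards [hVopen.mem_nhds hy] with z hz
      exact (hV z hz).2.1
    have hidd : HasFDerivAt (fun z => Φ (Ψ z))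
        (ContinuousLinearMap.id ℝ ((Fin n → ℝ) × ℝ)) y :=
      (hasFDerivAt_id y).congr_of_eventuallyEq hev
    have huniq : ((ContinuousLinearMap.fst ℝ (Fin n → ℝ) ℝ).prod
        (fderiv ℝ W (Ψ y))).comp (fderiv ℝ Ψ y)
        = ContinuousLinearMap.id ℝ ((Fin n → ℝ) × ℝ) := hcomp.unique hidd
    have hAcomp : (fderiv ℝ W (Ψ y)).comp (fderiv ℝ Ψ y)
        = ContinuousLinearMap.snd ℝ (Fin n → ℝ) ℝ := by
      have := congrArg (fun L => (ContinuousLinearMap.snd ℝ (Fin n → ℝ) ℝ).comp L) huniq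
      simpa [← ContinuousLinearMap.comp_assoc, ContinuousLinearMap.snd_comp_prod] using this
    have : (fderiv ℝ Wtil (Ψ y)).comp (fderiv ℝ Ψ y)
        = lam (Ψ y) • ContinuousLinearMap.snd ℝ (Fin n → ℝ) ℝ := by
      rw [hBA (Ψ y) hΨΩ, ContinuousLinearMap.smul_comp, hAcomp]
    rwa [this] at hgd
  -- a ball inside V around Φ q
  have hΦqV : Φ q ∈ V := (hU q hqU).1
  obtain ⟨ε, hεpos, hεV⟩ := Metric.isOpen_iff.1 hVopen (Φ q) hΦqV
  -- x-independence of g on the ball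
  have hxind : ∀ y ∈ ball (Φ q) ε, g y = g (q.1, y.2) := by
    rintro ⟨x, w⟩ hy
    have hx : x ∈ ball q.1 ε ∧ w ∈ ball (W q) ε := by
      rw [mem_ball, Prod.dist_eq, max_lt_iff] at hy
      exact ⟨mem_ball.2 hy.1, mem_ball.2 hy.2⟩
    have hmem : ∀ x' ∈ ball q.1 ε, ((x', w) : (Fin n → ℝ) × ℝ) ∈ ball (Φ q) ε := by
      intro x' hx'
      rw [mem_ball, Prod.dist_eq, max_lt_iff]
      exact ⟨mem_ball.1 hx', mem_ball.1 hx.2⟩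
    have key : ∀ x' ∈ ball q.1 ε, HasFDerivAt (fun x'' => g (x'', w))
        (0 : (Fin n → ℝ) →L[ℝ] ℝ) x' := by
      intro x' hx'
      have hc : HasFDerivAt (fun x'' : Fin n → ℝ => ((x'', w) : (Fin n → ℝ) × ℝ))
          ((ContinuousLinearMap.id ℝ (Fin n → ℝ)).prod 0) x' :=
        (hasFDerivAt_id x').prodMk (hasFDerivAt_const w x')
      have := (hgderiv (x', w) (hεV (hmem x' hx'))).comp x' hc
      have hz : (lam (Ψ (x', w)) • ContinuousLinearMap.snd ℝ (Fin n → ℝ) ℝ).comp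
          ((ContinuousLinearMap.id ℝ (Fin n → ℝ)).prod 0) = 0 := by
        rw [ContinuousLinearMap.smul_comp, ContinuousLinearMap.snd_comp_prod, smul_zero]
      rwa [hz] at this
    have hconst := (convex_ball q.1 ε).is_const_of_fderivWithin_eq_zero
      (f := fun x'' => g (x'', w))
      (fun x' hx' => (key x' hx').differentiableAt.differentiableWithinAt)
      (fun x' hx' => by
        rw [fderivWithin_of_isOpen isOpen_ball hx', (key x' hx').fderiv])
      hx.1 (mem_ball_self hεpos)
    exact hconst
  -- the one-variable functions
  set w₀ : ℝ := W q with hw₀def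
  set ρ₀ : ℝ → ℝ := fun w => g (q.1, w) with hρ₀def
  set η : ℝ → ℝ := fun w => lam (Ψ (q.1, w)) with hηdef
  have hmemb : ∀ w ∈ ball w₀ ε, ((q.1, w) : (Fin n → ℝ) × ℝ) ∈ ball (Φ q) ε := by
    intro w hw
    rw [mem_ball, Prod.dist_eq, max_lt_iff]
    exact ⟨by simpa [hΦdef] using hεpos, mem_ball.1 hw⟩
  have hρ₀deriv : ∀ w ∈ ball w₀ ε, HasDerivAt ρ₀ (η w) w := by
    intro w hw
    have hc : HasDerivAt (fun w' : ℝ => ((q.1, w') : (Fin n → ℝ) × ℝ))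
        (((0 : Fin n → ℝ), (1 : ℝ))) w :=
      (hasDerivAt_const w q.1).prodMk (hasDerivAt_id w)
    have := (hgderiv (q.1, w) (hεV (hmemb w hw))).comp_hasDerivAt w hc
    simp at this
    exact this
  have hηsmooth : ∀ w ∈ ball w₀ ε, ContDiffAt ℝ (⊤ : ℕ∞) η w := by
    intro w hw
    have h1 : ContDiffAt ℝ (⊤ : ℕ∞) (fun w' : ℝ => ((q.1, w') : (Fin n → ℝ) × ℝ)) w :=
      contDiffAt_const.prodMk contDiffAt_id
    have h2 : ContDiffAt ℝ (⊤ : ℕ∞) Ψ (q.1, w) := (hV _ (hεV (hmemb w hw))).2.2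
    have hΨΩ : Ψ (q.1, w) ∈ Ω := (hV _ (hεV (hmemb w hw))).1
    have hlamsm : ContDiffOn ℝ (⊤ : ℕ∞) lam Ω := by
      have h1top : ((⊤ : ℕ∞) : WithTop ℕ∞) + 1 ≤ ((⊤ : ℕ∞) : WithTop ℕ∞) := by
        exact_mod_cast le_top
      have hdW : ContDiffOn ℝ (⊤ : ℕ∞) (fderiv ℝ W) Ω := hW.fderiv_of_isOpen hΩ h1top
      have hdWt : ContDiffOn ℝ (⊤ : ℕ∞) (fderiv ℝ Wtil) Ω := hWtil.fderiv_of_isOpen hΩ h1top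
      exact ContDiffOn.div (hdWt.clm_apply contDiffOn_const)
        (hdW.clm_apply contDiffOn_const) hWv
    exact (hlamsm.contDiffAt (hΩ.mem_nhds hΨΩ)).comp w (h2.comp w h1)
  have hρ₀smooth : ∀ w ∈ ball w₀ ε, ContDiffAt ℝ (⊤ : ℕ∞) ρ₀ w := by
    intro w hw
    exact (hgsmooth _ (hεV (hmemb w hw))).comp w (contDiffAt_const.prodMk contDiffAt_id)
  -- the constant
  have hΨΦq : Ψ (Φ q) = q := (hU q hqU).2
  set cval : ℝ := η w₀ with hcvaldef
  have hcval : cval = lam q := by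
    simp only [hcvaldef, hηdef]
    congr 1
  have hcvalne : cval ≠ 0 := by rw [hcval]; exact hlamne q hq
  -- choose δ
  have hηcont : ContinuousAt η w₀ := (hηsmooth w₀ (mem_ball_self hεpos)).continuousAt
  obtain ⟨δ₀, hδ₀pos, hδ₀⟩ := Metric.continuousAt_iff.1 hηcont (|cval| / 2)
    (by positivity)
  set δ : ℝ := min (δ₀ / 2) (ε / 2) with hδdef
  have hδpos : 0 < δ := lt_min (by linarith) (by linarith)
  have hδε : δ < ε := lt_of_le_of_lt (min_le_right _ _) (by linarith)
  have hδball : ∀ w ∈ ball w₀ δ, |η w - cval| ≤ |cval| / 2 := by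
    intro w hw
    have : dist w w₀ < δ₀ := lt_of_lt_of_le (mem_ball.1 hw)
      (le_trans (min_le_left _ _) (by linarith))
    have := hδ₀ this
    rw [Real.dist_eq] at this
    linarith [le_of_lt this]
  -- bump function
  set bump : ContDiffBump w₀ := ⟨δ / 2, δ, by positivity, by linarith⟩ with hbumpdef
  set D : ℝ → ℝ := fun w => bump w * (η w - cval) + cval with hDdef
  have hDsmooth : ContDiff ℝ (⊤ : ℕ∞) D := by
    rw [contDiff_iff_contDiffAt]
    intro w
    by_cases hw : w ∈ ball w₀ ε
    · exact ((bump.contDiff.contDiffAt.mul ((hηsmooth w hw).sub contDiffAt_const)).add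
        contDiffAt_const)
    · have hws : w ∉ tsupport (⇑bump) := by
        rw [bump.tsupport_eq]
        intro hmem
        exact hw (lt_of_le_of_lt (mem_closedBall.1 hmem) hδε)
      have hev : D =ᶠ[nhds w] fun _ => cval := by
        filter_upwards [(isClosed_tsupport (⇑bump)).isOpen_compl.mem_nhds hws] with z hz
        have : bump z = 0 := image_eq_zero_of_notMem_tsupport hz
        simp [hDdef, this]
      exact contDiffAt_const.congr_of_eventuallyEq hev
  have hDdist : ∀ w, |D w - cval| ≤ |cval| / 2 := by
    intro w
    have hDsub : D w - cval = bump w * (η w - cval) := by simp [hDdef]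
    by_cases hw : w ∈ ball w₀ δ
    · rw [hDsub, abs_mul]
      calc |bump w| * |η w - cval| ≤ 1 * (|cval| / 2) := by
            apply mul_le_mul (by rw [abs_of_nonneg bump.nonneg]; exact bump.le_one)
              (hδball w hw) (abs_nonneg _) zero_le_one
        _ = |cval| / 2 := one_mul _
    · have : bump w = 0 := by
        have : w ∉ Function.support (⇑bump) := by rw [bump.support_eq]; exact hw
        simpa [Function.mem_support] using this
      rw [hDsub, this, zero_mul, abs_zero]
      positivity
  have hDne : ∀ w, D w ≠ 0 := by
    intro w hw0
    have := hDdist w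
    rw [hw0, zero_sub, abs_neg] at this
    have := abs_pos.2 hcvalne
    linarith
  -- the global function ρ
  set ρ : ℝ → ℝ := fun w => ρ₀ w₀ + ∫ t in w₀..w, D t with hρdef
  have hρderivAt : ∀ w, HasDerivAt ρ (D w) w := by
    intro w
    exact ((hDsmooth.continuous.integral_hasStrictDerivAt w₀ w).hasDerivAt).const_add (ρ₀ w₀)
  have hρderiv : deriv ρ = D := funext fun w => (hρderivAt w).deriv
  have hρsmooth : ContDiff ℝ (⊤ : ℕ∞) ρ := by
    rw [contDiff_infty_iff_deriv]
    exact ⟨fun w => (hρderivAt w).differentiableAt, by rw [hρderiv]; exact hDsmooth⟩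
  have hρne : ∀ w, deriv ρ w ≠ 0 := by rw [hρderiv]; exact hDne
  -- ρ agrees with ρ₀ on the small ball
  have hDη : ∀ w ∈ ball w₀ (δ / 2), D w = η w := by
    intro w hw
    have h1 : bump w = 1 := bump.one_of_mem_closedBall (ball_subset_closedBall hw)
    simp [hDdef, h1]
  have hballsub : ball w₀ (δ / 2) ⊆ ball w₀ ε :=
    ball_subset_ball (by linarith)
  have hρρ₀ : ∀ w ∈ ball w₀ (δ / 2), ρ w = ρ₀ w := by
    intro w hw
    have hdiff : ∀ w' ∈ ball w₀ (δ / 2), HasDerivAt (fun u => ρ u - ρ₀ u) 0 w' := by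
      intro w' hw'
      have := (hρderivAt w').sub (hρ₀deriv w' (hballsub hw'))
      rwa [hDη w' hw', sub_self] at this
    have hconst := (convex_ball w₀ (δ / 2)).is_const_of_fderivWithin_eq_zero
      (f := fun u => ρ u - ρ₀ u)
      (fun w' hw' => (hdiff w' hw').differentiableAt.differentiableWithinAt)
      (fun w' hw' => by
        rw [fderivWithin_of_isOpen isOpen_ball hw', ((hdiff w' hw').hasFDerivAt).fderiv]
        ext
        simp)
      hw (mem_ball_self (by positivity))
    have hval : ρ w₀ - ρ₀ w₀ = 0 := by
      simp [hρdef, intervalIntegral.integral_same]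
    have : ρ w - ρ₀ w = ρ w₀ - ρ₀ w₀ := hconst
    rw [hval] at this
    linarith
  -- define O
  have hΦcont : ContinuousOn Φ Ω := fun p hp =>
    (contDiffAt_fst.prodMk (hW.contDiffAt (hΩ.mem_nhds hp))).continuousAt.continuousWithinAt
  set O : Set ((Fin n → ℝ) × ℝ) := U ∩ Φ ⁻¹' (ball (Φ q) (δ / 2)) with hOdef
  have hOopen : IsOpen O :=
    (hΦcont.mono hUΩ).isOpen_inter_preimage hUopen isOpen_ball
  have hOq : q ∈ O := ⟨hqU, mem_preimage.2 (mem_ball_self (half_pos hδpos))⟩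
  have hOsub : O ⊆ Ω := fun p hp => hUΩ hp.1
  -- key facts for p ∈ O
  have hWpball : ∀ p ∈ O, W p ∈ ball w₀ (δ / 2) := by
    rintro p ⟨hpU, hpball⟩
    have := mem_ball.1 (mem_preimage.1 hpball)
    rw [Prod.dist_eq, max_lt_iff] at this
    exact mem_ball.2 this.2
  have hballV : ball (Φ q) (δ / 2) ⊆ V := fun y hy =>
    hεV (ball_subset_ball (by linarith) hy)
  have hWtilρ : ∀ p ∈ O, Wtil p = ρ (W p) := by
    intro p hp
    obtain ⟨hpU, hpball⟩ := hp
    have h1 : Wtil p = g (Φ p) := by rw [hgdef]; simp only; rw [(hU p hpU).2]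
    have h2 : g (Φ p) = g (q.1, W p) := by
      have := hxind (Φ p) (ball_subset_ball (by linarith) (mem_preimage.1 hpball))
      simpa using this
    rw [h1, h2]
    exact (hρρ₀ (W p) (hWpball p ⟨hpU, hpball⟩)).symm
  refine ⟨O, hOsub, hOopen, hOq, ρ, hρsmooth, hρne, hWtilρ, ?_⟩
  rintro w ⟨p, hpO, rfl⟩
  have hwball : W p ∈ ball w₀ (δ / 2) := hWpball p hpO
  have hyV : ((q.1, W p) : (Fin n → ℝ) × ℝ) ∈ V := by
    apply hballV
    rw [mem_ball, Prod.dist_eq, max_lt_iff]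
    exact ⟨by simpa [hΦdef] using hδpos.trans_le (by linarith), mem_ball.1 hwball⟩
  set s : (Fin n → ℝ) × ℝ := Ψ (q.1, W p) with hsdef
  obtain ⟨hsΩ, hΦs, _⟩ := hV _ hyV
  have hWs : W s = W p := congrArg Prod.snd hΦs
  have hWtils : Wtil s = ρ (W p) := by
    have : Wtil s = ρ₀ (W p) := rfl
    rw [this, hρρ₀ (W p) hwball]
  have hder : deriv ρ (W p) = lam s := by
    rw [hρderiv, hDη (W p) hwball]
  have he1 := heq1 s hsΩ
  rw [hWs, hWtils] at he1
  rw [hder]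
  have hAs := hWv s hsΩ
  have hBs := hWtv s hsΩ
  rw [hlamdef]
  field_simp at he1 ⊢
  linarith [he1]
end

section
/- Let Ω ⊆ ℝⁿ × ℝ be open (coordinates x¹,…,xⁿ and v) and let W : Ω → ℝ be smooth with ∂W/∂v ≠ 0 at every point of Ω. Define bᵢ = −(∂W/∂xⁱ)/(∂W/∂v) for i = 1,…,n. Then for all i, j ∈ {1,…,n} and at every point of Ω: ∂bᵢ/∂xʲ + bⱼ·∂bᵢ/∂v = ∂bⱼ/∂xⁱ + bᵢ·∂bⱼ/∂v. -/
/-- Quotient rule, pointwise form, for `-F/G`. -/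
lemma quot_fderiv_apply {E : Type*} [NormedAddCommGroup E] [NormedSpace ℝ E]
    {F G : E → ℝ} {p : E} (hF : DifferentiableAt ℝ F p) (hG : DifferentiableAt ℝ G p)
    (hGp : G p ≠ 0) (w : E) :
    fderiv ℝ (fun q => -(F q) / G q) p w
      = (F p * fderiv ℝ G p w - G p * fderiv ℝ F p w) / (G p) ^ 2 := by
  have h1 : (fun q => -(F q) / G q) = fun q => (-(F q)) * (G q)⁻¹ := by
    funext q; rw [div_eq_mul_inv]
  rw [h1]
  have hFn : DifferentiableAt ℝ (fun q => -(F q)) p := hF.neg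
  have hGi : HasFDerivAt (fun q => (G q)⁻¹)
      ((ContinuousLinearMap.smulRight (1 : ℝ →L[ℝ] ℝ) (-(G p ^ 2)⁻¹)).comp (fderiv ℝ G p)) p :=
    (hasFDerivAt_inv hGp).comp p hG.hasFDerivAt
  rw [fderiv_fun_mul hFn hGi.differentiableAt, hGi.fderiv]
  have hFn' : fderiv ℝ (fun q => -(F q)) p = -fderiv ℝ F p := fderiv_fun_neg
  rw [hFn']
  simp only [ContinuousLinearMap.add_apply, ContinuousLinearMap.smul_apply,
    ContinuousLinearMap.comp_apply, ContinuousLinearMap.smulRight_apply,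
    ContinuousLinearMap.one_apply, ContinuousLinearMap.neg_apply, smul_eq_mul]
  field_simp
  ring

/-- The quotients `bᵢ = −∇ᵢW/W_v` arising from a smooth `W` with
`W_v ≠ 0` always satisfy the normality equations
`∂bᵢ/∂xʲ + bⱼ·∂bᵢ/∂v = ∂bⱼ/∂xⁱ + bᵢ·∂bⱼ/∂v`. -/
theorem normality_equations_necessary (n : ℕ) (Ω : Set ((Fin n → ℝ) × ℝ)) (hΩ : IsOpen Ω)
    (W : (Fin n → ℝ) × ℝ → ℝ) (hW : ContDiffOn ℝ (⊤ : ℕ∞) W Ω)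
    (hWv : ∀ p ∈ Ω, fderiv ℝ W p (0, 1) ≠ 0)
    (b : Fin n → (Fin n → ℝ) × ℝ → ℝ)
    (hb : ∀ i p, b i p = -(fderiv ℝ W p (Pi.single i 1, 0)) / fderiv ℝ W p (0, 1))
    (i j : Fin n) (p : (Fin n → ℝ) × ℝ) (hp : p ∈ Ω) :
    fderiv ℝ (b i) p (Pi.single j 1, 0) + b j p * fderiv ℝ (b i) p (0, 1)
      = fderiv ℝ (b j) p (Pi.single i 1, 0) + b i p * fderiv ℝ (b j) p (0, 1) := by
  have hCA : ContDiffAt ℝ (⊤ : ℕ∞) W p := hW.contDiffAt (hΩ.mem_nhds hp)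
  have hA : DifferentiableAt ℝ (fderiv ℝ W) p :=
    (hCA.fderiv_right (m := (⊤ : ℕ∞)) (by norm_cast)).differentiableAt (by norm_cast)
  set A := fderiv ℝ (fderiv ℝ W) p with hAdef
  -- differentiability and derivative of q ↦ fderiv ℝ W q z
  have hFz : ∀ z , DifferentiableAt ℝ (fun q => fderiv ℝ W q z) p := fun z =>
    hA.clm_apply (differentiableAt_const z)
  have hFz' : ∀ z w , fderiv ℝ (fun q => fderiv ℝ W q z) p w = A w z := by
    intro z w
    rw [fderiv_clm_apply hA (differentiableAt_const z)]
    simp [hAdef]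
  have hsymm : ∀ v w , A v w = A w v := by
    intro v w
    exact (hCA.isSymmSndFDerivAt (by rw [minSmoothness_of_isRCLikeNormedField]; exact WithTop.coe_le_coe.mpr (le_top : (2 : ℕ∞) ≤ ⊤))) v w
  set vi : (Fin n → ℝ) × ℝ := (Pi.single i 1, 0)
  set vj : (Fin n → ℝ) × ℝ := (Pi.single j 1, 0)
  set ev  := ((0 : Fin n → ℝ), (1 : ℝ))
  have hg : fderiv ℝ W p ev ≠ 0 := hWv p hp
  have hbfun : ∀ k : Fin n, b k = fun q =>
      -(fderiv ℝ W q ((Pi.single k 1, 0) )) / fderiv ℝ W q ev := fun k => funext (hb k)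
  have key : ∀ (k : Fin n) (w ),
      fderiv ℝ (b k) p w
        = (fderiv ℝ W p ((Pi.single k 1, 0) ) * A w ev
            - fderiv ℝ W p ev * A w ((Pi.single k 1, 0) )) / (fderiv ℝ W p ev) ^ 2 := by
    intro k w
    rw [hbfun k, quot_fderiv_apply (hFz _) (hFz _) hg, hFz', hFz']
  have hbi : b i p = -(fderiv ℝ W p vi) / fderiv ℝ W p ev := hb i p
  have hbj : b j p = -(fderiv ℝ W p vj) / fderiv ℝ W p ev := hb j p
  rw [key i vj, key i ev, key j vi, key j ev, hbi, hbj]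
  have s1 : A vj vi = A vi vj := hsymm vj vi
  have s2 : A ev vi = A vi ev := hsymm ev vi
  have s3 : A ev vj = A vj ev := hsymm ev vj
  field_simp
  ring_nf
  rw [s1, s2, s3]
  ring
end

section
/- Let Ω ⊆ ℝⁿ × ℝ be open (coordinates x¹,…,xⁿ and v = xⁿ⁺¹), let b₁,…,bₙ : Ω → ℝ and φ : Ω → ℝ be smooth with φ(q) ≠ 0 for all q ∈ Ω. Define the components of a 1-form ω on Ω by ωᵢ = −bᵢ·φ for i = 1,…,n and ωₙ₊₁ = φ. If the closedness relations ∂ωᵢ/∂xʲ − ∂ωⱼ/∂xⁱ = 0 hold on Ω for all i, j ∈ {1,…,n+1}, then: (a) ∂φ/∂xⁱ = −(∂bᵢ/∂v)·φ − (∂φ/∂v)·bᵢ on Ω for each i ∈ {1,…,n}, and (b) ∂bᵢ/∂xʲ + bⱼ·∂bᵢ/∂v = ∂bⱼ/∂xⁱ + bᵢ·∂bⱼ/∂v on Ω for all i, j ∈ {1,…,n}. -/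
/-- Closedness of the 1-form with components
`ωᵢ = −bᵢ·φ` (i = 1,…,n), `ωₙ₊₁ = φ` (with `φ ≠ 0`) forces (a) the equations (4.6)
for `φ` and (b) the normality equations (4.7) for the `bᵢ`. Coordinates on ℝⁿ⁺¹:
`xⁱ` is coordinate `i.castSucc`, `v` is coordinate `Fin.last n`. -/
theorem closedness_forces_normality (n : ℕ) (Ω : Set (Fin (n + 1) → ℝ)) (hΩ : IsOpen Ω)
    (b : Fin n → (Fin (n + 1) → ℝ) → ℝ) (φ : (Fin (n + 1) → ℝ) → ℝ)
    (hb : ∀ i, ContDiffOn ℝ (⊤ : ℕ∞) (b i) Ω) (hφ : ContDiffOn ℝ (⊤ : ℕ∞) φ Ω)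
    (hφ0 : ∀ q ∈ Ω, φ q ≠ 0)
    (ω : Fin (n + 1) → (Fin (n + 1) → ℝ) → ℝ)
    (hω1 : ∀ i : Fin n, ω i.castSucc = fun q => -(b i q) * φ q)
    (hω2 : ω (Fin.last n) = φ)
    (hclosed : ∀ i j : Fin (n + 1), ∀ q ∈ Ω,
        fderiv ℝ (ω i) q (Pi.single j 1) - fderiv ℝ (ω j) q (Pi.single i 1) = 0) :
    (∀ i : Fin n, ∀ q ∈ Ω,
        fderiv ℝ φ q (Pi.single i.castSucc 1)
          = -(fderiv ℝ (b i) q (Pi.single (Fin.last n) 1)) * φ q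
            - fderiv ℝ φ q (Pi.single (Fin.last n) 1) * b i q) ∧
    (∀ i j : Fin n, ∀ q ∈ Ω,
        fderiv ℝ (b i) q (Pi.single j.castSucc 1)
            + b j q * fderiv ℝ (b i) q (Pi.single (Fin.last n) 1)
          = fderiv ℝ (b j) q (Pi.single i.castSucc 1)
            + b i q * fderiv ℝ (b j) q (Pi.single (Fin.last n) 1)) := by
  have hbd : ∀ (i : Fin n) (q : Fin (n+1) → ℝ), q ∈ Ω → DifferentiableAt ℝ (b i) q := by
    intro i q hq
    exact ((hb i).contDiffAt (hΩ.mem_nhds hq)).differentiableAt (by simp)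
  have hφd : ∀ (q : Fin (n+1) → ℝ), q ∈ Ω → DifferentiableAt ℝ φ q := by
    intro q hq
    exact (hφ.contDiffAt (hΩ.mem_nhds hq)).differentiableAt (by simp)
  have key : ∀ (i : Fin n) (q : Fin (n+1) → ℝ), q ∈ Ω → ∀ e : Fin (n+1) → ℝ,
      fderiv ℝ (ω i.castSucc) q e
        = -(fderiv ℝ (b i) q e * φ q) - b i q * fderiv ℝ φ q e := by
    intro i q hq e
    rw [hω1 i]
    have : (fun q => -(b i q) * φ q) = fun q => -(b i q * φ q) := by
      funext x; ring
    rw [this, fderiv_fun_neg, fderiv_fun_mul (hbd i q hq) (hφd q hq)]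
    simp
    ring
  have ha : ∀ i : Fin n, ∀ q ∈ Ω,
      fderiv ℝ φ q (Pi.single i.castSucc 1)
        = -(fderiv ℝ (b i) q (Pi.single (Fin.last n) 1)) * φ q
          - fderiv ℝ φ q (Pi.single (Fin.last n) 1) * b i q := by
    intro i q hq
    have h := hclosed i.castSucc (Fin.last n) q hq
    rw [sub_eq_zero] at h
    rw [key i q hq, hω2] at h
    linarith [h]
  refine ⟨ha, ?_⟩
  intro i j q hq
  have h := hclosed i.castSucc j.castSucc q hq
  rw [sub_eq_zero, key i q hq, key j q hq] at h
  rw [ha i q hq, ha j q hq] at h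
  have hφne := hφ0 q hq
  have : (fderiv ℝ (b i) q (Pi.single j.castSucc 1)
            + b j q * fderiv ℝ (b i) q (Pi.single (Fin.last n) 1)
          - (fderiv ℝ (b j) q (Pi.single i.castSucc 1)
            + b i q * fderiv ℝ (b j) q (Pi.single (Fin.last n) 1))) * φ q = 0 := by
    ring_nf
    ring_nf at h
    linarith [h]
  rcases mul_eq_zero.1 this with h0 | h0
  · linarith [sub_eq_zero.1 h0]
  · exact absurd h0 hφne
end

section
/- Let Ω ⊆ ℝⁿ × ℝ be open (coordinates x¹,…,xⁿ and v), let W : Ω → ℝ be smooth with ∂W/∂v ≠ 0 at every point of Ω, and let h : ℝ → ℝ be smooth. Define a = h(W)/(∂W/∂v) and bᵢ = −(∂W/∂xⁱ)/(∂W/∂v) for i = 1,…,n. Then for each i ∈ {1,…,n} and at every point of Ω: ∂a/∂xⁱ + bᵢ·∂a/∂v = (∂bᵢ/∂v)·a. -/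
/-- The gauge-invariant quantity `a = h(W)/W_v` satisfies equation
(6.2): `∂a/∂xⁱ + bᵢ·∂a/∂v = (∂bᵢ/∂v)·a`, with `bᵢ = −∇ᵢW/W_v`. -/
theorem a_satisfies_eq_62 (n : ℕ) (Ω : Set ((Fin n → ℝ) × ℝ)) (hΩ : IsOpen Ω)
    (W : (Fin n → ℝ) × ℝ → ℝ) (hW : ContDiffOn ℝ (⊤ : ℕ∞) W Ω)
    (hWv : ∀ p ∈ Ω, fderiv ℝ W p (0, 1) ≠ 0)
    (h : ℝ → ℝ) (hh : ContDiff ℝ (⊤ : ℕ∞) h)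
    (a : (Fin n → ℝ) × ℝ → ℝ) (b : Fin n → (Fin n → ℝ) × ℝ → ℝ)
    (ha : ∀ p, a p = h (W p) / fderiv ℝ W p (0, 1))
    (hb : ∀ i p, b i p = -(fderiv ℝ W p (Pi.single i 1, 0)) / fderiv ℝ W p (0, 1))
    (i : Fin n) (p : (Fin n → ℝ) × ℝ) (hp : p ∈ Ω) :
    fderiv ℝ a p (Pi.single i 1, 0) + b i p * fderiv ℝ a p (0, 1)
      = fderiv ℝ (b i) p (0, 1) * a p := by
  have hWp : ContDiffAt ℝ (⊤ : ℕ∞) W p := hW.contDiffAt (hΩ.mem_nhds hp)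
  have hW1 : DifferentiableAt ℝ W p := hWp.differentiableAt (by simp)
  have hW2 : ContDiffAt ℝ (⊤ : ℕ∞) (fderiv ℝ W) p := hWp.fderiv_right (by simp)
  have hdF : DifferentiableAt ℝ (fderiv ℝ W) p := hW2.differentiableAt (by simp)
  set w : (Fin n → ℝ) × ℝ := ((0 : Fin n → ℝ), (1:ℝ)) with hw
  set e : (Fin n → ℝ) × ℝ := (Pi.single i 1, (0:ℝ)) with he
  have hWv0 : fderiv ℝ W p w ≠ 0 := hWv p hp
  set f2 := fderiv ℝ (fderiv ℝ W) p with hf2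
  have hsymm : f2 w e = f2 e w := by
    have := (hWp.isSymmSndFDerivAt (by rw [minSmoothness_of_isRCLikeNormedField]; exact WithTop.coe_le_coe.mpr le_top)) w e
    simpa [hf2] using this
  -- derivative of q ↦ fderiv W q w
  have hg : HasFDerivAt (fun q => fderiv ℝ W q w)
      ((ContinuousLinearMap.apply ℝ ℝ w).comp f2) p :=
    (ContinuousLinearMap.apply ℝ ℝ w).hasFDerivAt.comp p hdF.hasFDerivAt
  have hgE : HasFDerivAt (fun q => fderiv ℝ W q e)
      ((ContinuousLinearMap.apply ℝ ℝ e).comp f2) p :=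
    (ContinuousLinearMap.apply ℝ ℝ e).hasFDerivAt.comp p hdF.hasFDerivAt
  have hnum : HasFDerivAt (fun q => h (W q)) (deriv h (W p) • fderiv ℝ W p) p :=
    ((hh.differentiable (by simp) (W p)).hasDerivAt).comp_hasFDerivAt p hW1.hasFDerivAt
  have hinv : HasFDerivAt (fun q => (fderiv ℝ W q w)⁻¹)
      ((-((fderiv ℝ W p w) ^ 2)⁻¹) • ((ContinuousLinearMap.apply ℝ ℝ w).comp f2)) p :=
    (hasDerivAt_inv hWv0).comp_hasFDerivAt p hg
  have hAder : fderiv ℝ (fun q => h (W q) * (fderiv ℝ W q w)⁻¹) p = _ := (hnum.mul hinv).fderiv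
  have hBder : fderiv ℝ (fun q => -(fderiv ℝ W q e) * (fderiv ℝ W q w)⁻¹) p = _ :=
    (hgE.neg.mul hinv).fderiv
  have haf : a = fun q => h (W q) * (fderiv ℝ W q w)⁻¹ :=
    funext fun q => by rw [ha q, div_eq_mul_inv]
  have hbf : b i = fun q => -(fderiv ℝ W q e) * (fderiv ℝ W q w)⁻¹ :=
    funext fun q => by rw [hb i q, div_eq_mul_inv]
  rw [haf, hbf, hAder, hBder]
  simp only [ContinuousLinearMap.add_apply, ContinuousLinearMap.smul_apply,
    ContinuousLinearMap.comp_apply, ContinuousLinearMap.apply_apply,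
    ContinuousLinearMap.neg_apply, smul_eq_mul, Pi.neg_apply]
  rw [← hsymm]
  field_simp
  ring
end

section
/- Let Ω ⊆ ℝⁿ × ℝ be open (coordinates x¹,…,xⁿ and v), and let b₁,…,bₙ, a : Ω → ℝ be smooth with a(q) ≠ 0 for all q ∈ Ω, satisfying ∂a/∂xⁱ + bᵢ·∂a/∂v = (∂bᵢ/∂v)·a on Ω for all i ∈ {1,…,n}. Then the function φ = 1/a satisfies ∂φ/∂xⁱ = −(∂bᵢ/∂v)·φ − (∂φ/∂v)·bᵢ on Ω for all i ∈ {1,…,n}. -/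
/-- If `a` is nowhere zero and satisfies equations (6.2)
`∂a/∂xⁱ + bᵢ·∂a/∂v = (∂bᵢ/∂v)·a` on `Ω`, then `φ = 1/a` satisfies equations (4.6)
`∂φ/∂xⁱ = −(∂bᵢ/∂v)·φ − (∂φ/∂v)·bᵢ` on `Ω`. -/
theorem inverse_of_a_is_integrating_factor (n : ℕ) (Ω : Set ((Fin n → ℝ) × ℝ))
    (hΩ : IsOpen Ω)
    (b : Fin n → (Fin n → ℝ) × ℝ → ℝ) (a : (Fin n → ℝ) × ℝ → ℝ)
    (hb : ∀ i, ContDiffOn ℝ (⊤ : ℕ∞) (b i) Ω) (ha : ContDiffOn ℝ (⊤ : ℕ∞) a Ω)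
    (ha0 : ∀ q ∈ Ω, a q ≠ 0)
    (heq : ∀ i : Fin n, ∀ p ∈ Ω,
        fderiv ℝ a p (Pi.single i 1, 0) + b i p * fderiv ℝ a p (0, 1)
          = fderiv ℝ (b i) p (0, 1) * a p)
    (φ : (Fin n → ℝ) × ℝ → ℝ) (hφ : ∀ p, φ p = 1 / a p)
    (i : Fin n) (p : (Fin n → ℝ) × ℝ) (hp : p ∈ Ω) :
    fderiv ℝ φ p (Pi.single i 1, 0)
      = -(fderiv ℝ (b i) p (0, 1)) * φ p - fderiv ℝ φ p (0, 1) * b i p := by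
  have haD : DifferentiableAt ℝ a p :=
    (ha.contDiffAt (hΩ.mem_nhds hp)).differentiableAt (by simp)
  have hap : a p ≠ 0 := ha0 p hp
  have hinv : HasFDerivAt (fun q => (a q)⁻¹)
      ((ContinuousLinearMap.smulRight (1 : ℝ →L[ℝ] ℝ) (-(a p ^ 2)⁻¹)).comp (fderiv ℝ a p)) p :=
    (hasFDerivAt_inv hap).comp p haD.hasFDerivAt
  have hφeq : φ = fun q => (a q)⁻¹ := by
    funext q; rw [hφ, one_div]
  have hDφ := hinv.fderiv
  rw [← hφeq] at hDφ
  rw [hDφ, hφ]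
  simp only [ContinuousLinearMap.comp_apply, ContinuousLinearMap.smulRight_apply,
    ContinuousLinearMap.one_apply, smul_eq_mul]
  have h := heq i p hp
  have hDei : fderiv ℝ a p (Pi.single i 1, 0)
      = fderiv ℝ (b i) p (0, 1) * a p - b i p * fderiv ℝ a p (0, 1) := by linarith
  rw [hDei]
  field_simp
  ring
end
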